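/- Consider the ODE problem u'(z) = a on (0, T) with u(0) = u₀, where a > 0 and u₀ ≥ 0, and collocation points 0 < z₁ < ⋯ < z_N < T. For parameters w₁, w₂ > 0 with w₁ + w₂ = a and 0 ≤ b < z₁·w₂, define u(z) = max(0, w₁ z + u₀) + max(0, w₂ z − b). Then u(0) = u₀, u is differentiable at each z_i with u'(z_i) = a for all i = 1, ..., N, so u achieves zero AD-PINN loss (1/N)Σᵢ |u'(zᵢ) − a|^ν + |u(0) − u₀|^ν. In particular, there are infinitely many distinct such zero-loss functions, parameterized by b ∈ [0, z₁w₂). -/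

import Mathlib

/-- For the ODE `u' = a` on `(0,T)` with `u 0 = u₀` (`a > 0`, `u₀ ≥ 0`) and
collocation points `0 < z 0 < ⋯ < z (N-1) < T`, every ReLU network of the form
`u z = max 0 (w₁ z + u₀) + max 0 (w₂ z - b)` with `w₁, w₂ > 0`, `w₁ + w₂ = a`, and
`0 ≤ b < z 0 * w₂`, satisfies `u 0 = u₀`, is differentiable at each `z i` with
derivative `a`, achieves zero AD-PINN loss, and takes the value
`u (z 0) = a * z 0 + u₀ - b`, so distinct `b` give distinct zero-loss minimizers. -/
theorem relu_adpinn_infinitely_many_zero_loss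
    (T a u₀ : ℝ) (ha : 0 < a) (hu₀ : 0 ≤ u₀)
    (N : ℕ) (hN : 0 < N) (z : Fin N → ℝ)
    (hz0 : ∀ i, 0 < z i) (hzT : ∀ i, z i < T) (hzmono : StrictMono z)
    (w₁ w₂ b : ℝ) (hw₁ : 0 < w₁) (hw₂ : 0 < w₂) (hsum : w₁ + w₂ = a)
    (hb0 : 0 ≤ b) (hb : b < z ⟨0, hN⟩ * w₂)
    (ν : ℝ) (hν : 1 ≤ ν)
    (u : ℝ → ℝ) (hu : ∀ x, u x = max 0 (w₁ * x + u₀) + max 0 (w₂ * x - b)) :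
    u 0 = u₀ ∧
    (∀ i, HasDerivAt u a (z i)) ∧
    ((1 / (N : ℝ)) * ∑ i, |deriv u (z i) - a| ^ ν + |u 0 - u₀| ^ ν = 0) ∧
    u (z ⟨0, hN⟩) = a * z ⟨0, hN⟩ + u₀ - b := by
  have hνpos : ν ≠ 0 := by linarith
  -- key positivity at each collocation point
  have hkey : ∀ i : Fin N, 0 < w₁ * z i + u₀ ∧ 0 < w₂ * z i - b := by
    intro i
    have hle : z ⟨0, hN⟩ ≤ z i := hzmono.monotone (by exact Fin.mk_le_of_le_val (Nat.zero_le _))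
    constructor
    · have : 0 < w₁ * z i := mul_pos hw₁ (hz0 i)
      linarith
    · have : z ⟨0, hN⟩ * w₂ ≤ z i * w₂ := by nlinarith
      nlinarith
  have hval : ∀ i : Fin N, u (z i) = a * z i + u₀ - b := by
    intro i
    obtain ⟨h1, h2⟩ := hkey i
    rw [hu, max_eq_right h1.le, max_eq_right h2.le]
    ring_nf
    nlinarith [hsum]
  have hderiv : ∀ i : Fin N, HasDerivAt u a (z i) := by
    intro i
    obtain ⟨h1, h2⟩ := hkey i
    have hlin : HasDerivAt (fun x => (w₁ * x + u₀) + (w₂ * x - b)) a (z i) := by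
      have := (((hasDerivAt_id (z i)).const_mul w₁).add_const u₀).add
        (((hasDerivAt_id (z i)).const_mul w₂).add_const (-b))
      simpa [hsum, mul_one, sub_eq_add_neg, Pi.add_def] using this
    refine hlin.congr_of_eventuallyEq ?_
    have hcont : Continuous (fun x => min (w₁ * x + u₀) (w₂ * x - b)) := by continuity
    have hopen : IsOpen {x : ℝ | 0 < min (w₁ * x + u₀) (w₂ * x - b)} :=
      isOpen_lt continuous_const hcont
    have hmem : z i ∈ {x : ℝ | 0 < min (w₁ * x + u₀) (w₂ * x - b)} := by
      simp only [Set.mem_setOf_eq, lt_min_iff]; exact ⟨h1, h2⟩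
    filter_upwards [hopen.mem_nhds hmem] with x hx
    simp only [Set.mem_setOf_eq, lt_min_iff] at hx
    rw [hu, max_eq_right hx.1.le, max_eq_right hx.2.le]
  have hu0 : u 0 = u₀ := by
    rw [hu]
    rw [max_eq_right (by simpa using hu₀), max_eq_left (by simpa using hb0)]
    ring
  refine ⟨hu0, hderiv, ?_, hval _⟩
  have : ∀ i : Fin N, |deriv u (z i) - a| ^ ν = 0 := by
    intro i
    rw [(hderiv i).deriv]
    simp [Real.zero_rpow hνpos]
  rw [Finset.sum_congr rfl (fun i _ => this i), hu0]
  simp [Real.zero_rpow hνpos]
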